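/- Fix pairwise distinct λ_1,…,λ_k ∈ ℂ, vectors h, w ∈ ℂ^k, and a point s ∈ ℂ with s ∉ {λ_1,…,λ_k} and 1 + Σ_{j=1}^k w_j/(s−λ_j) ≠ 0; set Ĥ(s) = (Σ_j h_j w_j/(s−λ_j))/(1 + Σ_j w_j/(s−λ_j)). Let σ^{(m)} ∈ ℂ^k and ŵ^{(m)} ∈ ℂ^k be sequences such that, for each j, ŵ^{(m)}_j → w_j and |Re(σ^{(m)}_j)| → ∞ as m → ∞. Then for all sufficiently large m, the value H_SO^{(m)}(s) = (Σ_j h_j ŵ^{(m)}_j(λ_j−σ^{(m)}_j)/((s−λ_j)(s−σ^{(m)}_j))) / (1 + Σ_j ŵ^{(m)}_j(λ_j−σ^{(m)}_j)/((s−λ_j)(s−σ^{(m)}_j))) is defined (the denominators do not vanish), and H_SO^{(m)}(s) → Ĥ(s) as m → ∞. -/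

import Mathlib

open BigOperators Filter

private lemma aux_ne (s : ℂ) (f : ℕ → ℂ) (hf : Tendsto (fun m => |(f m).re|) atTop atTop) :
    ∀ᶠ m in atTop, s ≠ f m := by
  filter_upwards [hf.eventually_gt_atTop |s.re|] with m hm heq
  rw [← heq] at hm; exact lt_irrefl _ hm

private lemma aux_inv (s : ℂ) (f : ℕ → ℂ) (hf : Tendsto (fun m => |(f m).re|) atTop atTop) :
    Tendsto (fun m => (s - f m)⁻¹) atTop (nhds 0) := by
  have hnorm : Tendsto (fun m => ‖s - f m‖) atTop atTop := by
    apply tendsto_atTop_mono (f := fun m => |(f m).re| - ‖s‖)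
    · intro m
      calc |(f m).re| - ‖s‖ ≤ ‖f m‖ - ‖s‖ := by
            have := Complex.abs_re_le_norm (f m); linarith
        _ ≤ ‖s - f m‖ := by
            have := norm_sub_norm_le (f m) s
            have : ‖f m - s‖ = ‖s - f m‖ := norm_sub_rev _ _
            have h2 := norm_sub_norm_le (f m) s
            rw [this] at h2; linarith
    · exact tendsto_atTop_add_const_right _ _ hf
  have : Tendsto (fun m => ‖(s - f m)⁻¹‖) atTop (nhds 0) := by
    simpa [norm_inv, Pi.inv_def] using hnorm.inv_tendsto_atTop
  exact tendsto_zero_iff_norm_tendsto_zero.mpr this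

theorem stmt_7 (k : ℕ) (lam : Fin k → ℂ) (hlam : Function.Injective lam)
    (h w : Fin k → ℂ) (s : ℂ) (hs : ∀ j, s ≠ lam j)
    (hden : 1 + ∑ j, w j / (s - lam j) ≠ 0)
    (sig : ℕ → Fin k → ℂ) (wh : ℕ → Fin k → ℂ)
    (hwh : ∀ j, Tendsto (fun m => wh m j) atTop (nhds (w j)))
    (hsig : ∀ j, Tendsto (fun m => |(sig m j).re|) atTop atTop) :
    (∀ᶠ m in atTop,
      (∀ j, s ≠ sig m j) ∧
      1 + ∑ j, wh m j * (lam j - sig m j) / ((s - lam j) * (s - sig m j)) ≠ 0)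
    ∧ Tendsto (fun m =>
        (∑ j, h j * (wh m j * (lam j - sig m j)) / ((s - lam j) * (s - sig m j)))
          / (1 + ∑ j, wh m j * (lam j - sig m j) / ((s - lam j) * (s - sig m j))))
      atTop
      (nhds ((∑ j, h j * w j / (s - lam j)) / (1 + ∑ j, w j / (s - lam j)))) := by
  have hne : ∀ᶠ m in atTop, ∀ j, s ≠ sig m j :=
    eventually_all.mpr fun j => aux_ne s (fun m => sig m j) (hsig j)
  -- each ratio tends
  have hratio : ∀ j : Fin k, Tendsto
      (fun m => (lam j - sig m j) / (s - sig m j)) atTop (nhds 1) := by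
    intro j
    have hinv := aux_inv s (fun m => sig m j) (hsig j)
    have hlim : Tendsto (fun m => (lam j - s) * (s - sig m j)⁻¹ + 1) atTop (nhds 1) := by
      have := (tendsto_const_nhds (x := lam j - s)).mul hinv
      simpa using this.add tendsto_const_nhds
    refine hlim.congr' ?_
    filter_upwards [aux_ne s (fun m => sig m j) (hsig j)] with m hm
    have hsm : s - sig m j ≠ 0 := sub_ne_zero.mpr hm
    field_simp
    ring
  have hterm : ∀ j : Fin k, Tendsto
      (fun m => wh m j * (lam j - sig m j) / ((s - lam j) * (s - sig m j)))
      atTop (nhds (w j / (s - lam j))) := by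
    intro j
    have hsl : s - lam j ≠ 0 := sub_ne_zero.mpr (hs j)
    have hlim : Tendsto (fun m => wh m j * ((lam j - sig m j) / (s - sig m j)) / (s - lam j))
        atTop (nhds (w j / (s - lam j))) := by
      have := ((hwh j).mul (hratio j)).div_const (s - lam j)
      simpa using this
    refine hlim.congr ?_
    intro m
    rw [div_mul_eq_div_div_swap]
    ring_nf
  have hdenlim : Tendsto
      (fun m => 1 + ∑ j, wh m j * (lam j - sig m j) / ((s - lam j) * (s - sig m j)))
      atTop (nhds (1 + ∑ j, w j / (s - lam j))) :=
    tendsto_const_nhds.add (tendsto_finset_sum _ fun j _ => hterm j)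
  have hnumlim : Tendsto
      (fun m => ∑ j, h j * (wh m j * (lam j - sig m j)) / ((s - lam j) * (s - sig m j)))
      atTop (nhds (∑ j, h j * w j / (s - lam j))) := by
    refine tendsto_finset_sum _ fun j _ => ?_
    have := (tendsto_const_nhds (x := h j)).mul (hterm j)
    simpa [mul_div_assoc] using this
  exact ⟨hne.and (hdenlim.eventually_ne hden), hnumlim.div hdenlim hden⟩
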